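/- Let Ω ⊂ ℝ³ be a bounded domain, a ∈ L^∞(Ω) with a ≥ 0 a.e., and let Ψ = Ψ₁ + Ψ₂ on (−1,1) with Ψ₁ ∈ C²((−1,1)), Ψ₂ ∈ C²([−1,1]). Let m ∈ C⁰([−1,1]) be non-negative, suppose m Ψ″ extends to a function in C⁰([−1,1]), that m(s)Ψ₁″(s) ≥ c₈ for all s ∈ [−1,1] and some c₈ > 0, and that there is ρ ∈ [0,1) with ρΨ₁″(s) + Ψ₂″(s) + a(x) ≥ 0 for all s ∈ (−1,1) and a.e. x ∈ Ω. Define Γ(s) := ∫₀^s m(r) dr and Λ(x,s) := ∫₀^s m(r)Ψ″(r) dr + a(x)Γ(s). Then for all measurable φ₁, φ₂ : Ω → ℝ with |φ₁| ≤ 1 and |φ₂| ≤ 1 a.e. in Ω: ∫_Ω (Λ(x,φ₁(x)) − Λ(x,φ₂(x)))(φ₁(x) − φ₂(x)) dx ≥ (1−ρ) c₈ ‖φ₁ − φ₂‖²_{L²(Ω)}. -/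

import Mathlib

open Set MeasureTheory

/-- `Γ(s) := ∫₀^s m(r) dr`. -/
noncomputable def GammaFn (m : ℝ → ℝ) (s : ℝ) : ℝ := ∫ r in (0 : ℝ)..s, m r

/-- `Λ(x,s) := ∫₀^s m(r) Ψ″(r) dr + a(x) Γ(s)`, with `Ψ″ = Ψ₁″ + Ψ₂″`. -/
noncomputable def LambdaFn (m Ψ₁'' Ψ₂'' : ℝ → ℝ) (a : (Fin 3 → ℝ) → ℝ)
    (x : Fin 3 → ℝ) (s : ℝ) : ℝ :=
  (∫ r in (0 : ℝ)..s, m r * (Ψ₁'' r + Ψ₂'' r)) + a x * GammaFn m s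

/-- Strong monotonicity of `Λ`:
`∫_Ω (Λ(x,φ₁) - Λ(x,φ₂))(φ₁ - φ₂) dx ≥ (1-ρ) c₈ ‖φ₁ - φ₂‖²_{L²(Ω)}`. -/
theorem stmt_12
    (Ω : Set (Fin 3 → ℝ)) (hΩopen : IsOpen Ω) (hΩconn : IsConnected Ω)
    (hΩbdd : Bornology.IsBounded Ω) (hΩmeas : MeasurableSet Ω)
    (a : (Fin 3 → ℝ) → ℝ) (haL : MemLp a ⊤ (volume.restrict Ω))
    (ha0 : ∀ᵐ x ∂(volume.restrict Ω), 0 ≤ a x)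
    (Ψ₁ Ψ₁' Ψ₁'' Ψ₂ Ψ₂' Ψ₂'' m G G₁ : ℝ → ℝ)
    (hΨ₁d : ∀ s ∈ Ioo (-1 : ℝ) 1, HasDerivAt Ψ₁ (Ψ₁' s) s)
    (hΨ₁d2 : ∀ s ∈ Ioo (-1 : ℝ) 1, HasDerivAt Ψ₁' (Ψ₁'' s) s)
    (hΨ₁''cont : ContinuousOn Ψ₁'' (Ioo (-1 : ℝ) 1))
    (hΨ₂d : ∀ s ∈ Icc (-1 : ℝ) 1, HasDerivWithinAt Ψ₂ (Ψ₂' s) (Icc (-1 : ℝ) 1) s)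
    (hΨ₂d2 : ∀ s ∈ Icc (-1 : ℝ) 1, HasDerivWithinAt Ψ₂' (Ψ₂'' s) (Icc (-1 : ℝ) 1) s)
    (hΨ₂''cont : ContinuousOn Ψ₂'' (Icc (-1 : ℝ) 1))
    (hmcont : ContinuousOn m (Icc (-1 : ℝ) 1))
    (hmnonneg : ∀ s ∈ Icc (-1 : ℝ) 1, 0 ≤ m s)
    -- `m Ψ″` extends to a continuous function `G` on `[-1,1]`
    (hGcont : ContinuousOn G (Icc (-1 : ℝ) 1))
    (hGext : ∀ s ∈ Ioo (-1 : ℝ) 1, G s = m s * (Ψ₁'' s + Ψ₂'' s))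
    -- `m Ψ₁″` extends to a continuous function `G₁` on `[-1,1]` with `m Ψ₁″ ≥ c₈` there
    (hG₁cont : ContinuousOn G₁ (Icc (-1 : ℝ) 1))
    (hG₁ext : ∀ s ∈ Ioo (-1 : ℝ) 1, G₁ s = m s * Ψ₁'' s)
    (c₈ : ℝ) (hc₈ : 0 < c₈)
    (hG₁lb : ∀ s ∈ Icc (-1 : ℝ) 1, c₈ ≤ G₁ s)
    (ρ : ℝ) (hρ0 : 0 ≤ ρ) (hρ1 : ρ < 1)
    (hconvex : ∀ᵐ x ∂(volume.restrict Ω), ∀ s ∈ Ioo (-1 : ℝ) 1,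
      0 ≤ ρ * Ψ₁'' s + Ψ₂'' s + a x)
    (φ₁ φ₂ : (Fin 3 → ℝ) → ℝ) (hφ₁meas : Measurable φ₁) (hφ₂meas : Measurable φ₂)
    (hφ₁bd : ∀ᵐ x ∂(volume.restrict Ω), |φ₁ x| ≤ 1)
    (hφ₂bd : ∀ᵐ x ∂(volume.restrict Ω), |φ₂ x| ≤ 1) :
    (1 - ρ) * c₈ * (∫ x in Ω, (φ₁ x - φ₂ x) ^ 2)
      ≤ ∫ x in Ω, (LambdaFn m Ψ₁'' Ψ₂'' a x (φ₁ x) - LambdaFn m Ψ₁'' Ψ₂'' a x (φ₂ x))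
          * (φ₁ x - φ₂ x) := by
  have h1ρ : 0 < 1 - ρ := by linarith
  set μ := volume.restrict Ω with hμdef
  have hμfin : IsFiniteMeasure μ := by
    constructor
    rw [hμdef, Measure.restrict_apply_univ]
    exact hΩbdd.measure_lt_top
  -- clamping to [-1,1]
  set cl : ℝ → ℝ := fun s => max (-1) (min 1 s) with hcl
  have hclcont : Continuous cl := continuous_const.max (continuous_const.min continuous_id)
  have hclmem : ∀ s, cl s ∈ Icc (-1 : ℝ) 1 := fun s =>
    ⟨le_max_left _ _, max_le (by norm_num) (min_le_left _ _)⟩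
  have hcleq : ∀ s ∈ Icc (-1 : ℝ) 1, cl s = s := by
    intro s hs
    rw [hcl]
    simp only
    rw [min_eq_right hs.2, max_eq_right hs.1]
  set Ge : ℝ → ℝ := fun s => G (cl s) with hGe
  set me : ℝ → ℝ := fun s => m (cl s) with hme
  have hGecont : Continuous Ge := hGcont.comp_continuous hclcont hclmem
  have hmecont : Continuous me := hmcont.comp_continuous hclcont hclmem
  set Pf : ℝ → ℝ := fun s => ∫ r in (0 : ℝ)..s, Ge r with hPf
  set Qf : ℝ → ℝ := fun s => ∫ r in (0 : ℝ)..s, me r with hQf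
  have hPfcont : Continuous Pf :=
    intervalIntegral.continuous_primitive (fun u v => hGecont.intervalIntegrable u v) 0
  have hQfcont : Continuous Qf :=
    intervalIntegral.continuous_primitive (fun u v => hmecont.intervalIntegrable u v) 0
  -- a.e. avoidance of the endpoints
  have hne : ∀ᵐ r : ℝ ∂volume, r ∉ ({-1, 1} : Set ℝ) := by
    refine compl_mem_ae_iff.mpr ?_
    exact (Set.toFinite _).measure_zero _
  -- Lambda in terms of Pf and Qf
  have hLam : ∀ (x : Fin 3 → ℝ) (s : ℝ), s ∈ Icc (-1 : ℝ) 1 →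
      LambdaFn m Ψ₁'' Ψ₂'' a x s = Pf s + a x * Qf s := by
    intro x s hs
    have hsub : uIcc (0 : ℝ) s ⊆ Icc (-1 : ℝ) 1 :=
      uIcc_subset_Icc ⟨by norm_num, by norm_num⟩ hs
    have e2 : GammaFn m s = Qf s := by
      rw [hQf]
      simp only
      apply intervalIntegral.integral_congr
      intro r hr
      rw [hme]
      simp only
      rw [hcleq r (hsub hr)]
    have e1 : (∫ r in (0 : ℝ)..s, m r * (Ψ₁'' r + Ψ₂'' r)) = Pf s := by
      rw [hPf]
      simp only
      apply intervalIntegral.integral_congr_ae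
      filter_upwards [hne] with r hr hrmem
      have hrI : r ∈ Icc (-1 : ℝ) 1 := hsub (uIoc_subset_uIcc hrmem)
      simp only [Set.mem_insert_iff, Set.mem_singleton_iff, not_or] at hr
      have hIoo : r ∈ Ioo (-1 : ℝ) 1 :=
        ⟨lt_of_le_of_ne hrI.1 (Ne.symm hr.1), lt_of_le_of_ne hrI.2 hr.2⟩
      rw [hGe]
      simp only
      rw [hcleq r hrI]
      exact (hGext r hIoo).symm
    simp only [LambdaFn]
    rw [e1, e2]
  -- pointwise key inequality
  have key : ∀ A : ℝ, 0 ≤ A → (∀ s ∈ Ioo (-1 : ℝ) 1, 0 ≤ ρ * Ψ₁'' s + Ψ₂'' s + A) →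
      ∀ s₁ ∈ Icc (-1 : ℝ) 1, ∀ s₂ ∈ Icc (-1 : ℝ) 1,
      (1 - ρ) * c₈ * (s₁ - s₂) ^ 2 ≤ ((Pf s₁ - Pf s₂) + A * (Qf s₁ - Qf s₂)) * (s₁ - s₂) := by
    intro A hA hconv
    have ordered : ∀ s₁ ∈ Icc (-1 : ℝ) 1, ∀ s₂ ∈ Icc (-1 : ℝ) 1, s₂ ≤ s₁ →
        (1 - ρ) * c₈ * (s₁ - s₂) ≤ (Pf s₁ - Pf s₂) + A * (Qf s₁ - Qf s₂) := by
      intro s₁ h₁ s₂ h₂ hle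
      have e1 : Pf s₁ - Pf s₂ = ∫ r in s₂..s₁, Ge r := by
        rw [hPf]
        simp only
        exact intervalIntegral.integral_interval_sub_left
          (hGecont.intervalIntegrable 0 s₁) (hGecont.intervalIntegrable 0 s₂)
      have e2 : Qf s₁ - Qf s₂ = ∫ r in s₂..s₁, me r := by
        rw [hQf]
        simp only
        exact intervalIntegral.integral_interval_sub_left
          (hmecont.intervalIntegrable 0 s₁) (hmecont.intervalIntegrable 0 s₂)
      rw [e1, e2, ← intervalIntegral.integral_const_mul,
        ← intervalIntegral.integral_add (g := fun r => A * me r) (hGecont.intervalIntegrable _ _)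
          ((continuous_const.mul hmecont).intervalIntegrable _ _)]
      have hconst : (1 - ρ) * c₈ * (s₁ - s₂) = ∫ _ in s₂..s₁, ((1 - ρ) * c₈) := by
        rw [intervalIntegral.integral_const, smul_eq_mul]
        ring
      rw [hconst]
      refine intervalIntegral.integral_mono_ae_restrict hle
        (continuous_const.intervalIntegrable _ _)
        ((hGecont.add (continuous_const.mul hmecont)).intervalIntegrable _ _) ?_
      filter_upwards [ae_restrict_of_ae hne, ae_restrict_mem measurableSet_Icc]
        with r hr hrmem
      have hrI : r ∈ Icc (-1 : ℝ) 1 := ⟨h₂.1.trans hrmem.1, hrmem.2.trans h₁.2⟩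
      simp only [Set.mem_insert_iff, Set.mem_singleton_iff, not_or] at hr
      have hIoo : r ∈ Ioo (-1 : ℝ) 1 :=
        ⟨lt_of_le_of_ne hrI.1 (Ne.symm hr.1), lt_of_le_of_ne hrI.2 hr.2⟩
      have hm0 : 0 ≤ m r := hmnonneg r hrI
      have hc0 : 0 ≤ ρ * Ψ₁'' r + Ψ₂'' r + A := hconv r hIoo
      have hg1 : c₈ ≤ m r * Ψ₁'' r := (hG₁ext r hIoo) ▸ hG₁lb r hrI
      show (1 - ρ) * c₈ ≤ Ge r + A * me r
      rw [hGe, hme]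
      simp only
      rw [hcleq r hrI, hGext r hIoo]
      nlinarith [mul_nonneg hm0 hc0, mul_le_mul_of_nonneg_left hg1 h1ρ.le]
    intro s₁ h₁ s₂ h₂
    rcases le_total s₂ s₁ with h | h
    · nlinarith [ordered s₁ h₁ s₂ h₂ h, sub_nonneg.mpr h]
    · nlinarith [ordered s₂ h₂ s₁ h₁ h, sub_nonneg.mpr h]
  -- the measurable representative of the integrand
  set g' : (Fin 3 → ℝ) → ℝ := fun x =>
    ((Pf (φ₁ x) - Pf (φ₂ x)) + a x * (Qf (φ₁ x) - Qf (φ₂ x))) * (φ₁ x - φ₂ x) with hg'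
  have haesm : AEStronglyMeasurable a μ := haL.1
  have hg'm : AEStronglyMeasurable g' μ := by
    apply AEStronglyMeasurable.mul
    · apply AEStronglyMeasurable.add
      · exact ((hPfcont.measurable.comp hφ₁meas).sub
          (hPfcont.measurable.comp hφ₂meas)).aestronglyMeasurable
      · exact haesm.mul ((hQfcont.measurable.comp hφ₁meas).sub
          (hQfcont.measurable.comp hφ₂meas)).aestronglyMeasurable
    · exact (hφ₁meas.sub hφ₂meas).aestronglyMeasurable
  -- bounds
  obtain ⟨MG, hMG⟩ := isCompact_Icc.exists_bound_of_continuousOn hGcont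
  obtain ⟨Mm, hMm⟩ := isCompact_Icc.exists_bound_of_continuousOn hmcont
  have hMG0 : 0 ≤ MG := le_trans (norm_nonneg _) (hMG 0 ⟨by norm_num, by norm_num⟩)
  have hMm0 : 0 ≤ Mm := le_trans (norm_nonneg _) (hMm 0 ⟨by norm_num, by norm_num⟩)
  have hPfbd : ∀ s : ℝ, |s| ≤ 1 → |Pf s| ≤ MG := by
    intro s hs
    have h := intervalIntegral.norm_integral_le_of_norm_le_const
      (a := (0 : ℝ)) (b := s) (C := MG) (f := Ge) (fun r _ => hMG (cl r) (hclmem r))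
    calc |Pf s| ≤ MG * |s - 0| := h
      _ ≤ MG * 1 := by
          apply mul_le_mul_of_nonneg_left _ hMG0
          simpa using hs
      _ = MG := mul_one _
  have hQfbd : ∀ s : ℝ, |s| ≤ 1 → |Qf s| ≤ Mm := by
    intro s hs
    have h := intervalIntegral.norm_integral_le_of_norm_le_const
      (a := (0 : ℝ)) (b := s) (C := Mm) (f := me) (fun r _ => hMm (cl r) (hclmem r))
    calc |Qf s| ≤ Mm * |s - 0| := h
      _ ≤ Mm * 1 := by
          apply mul_le_mul_of_nonneg_left _ hMm0
          simpa using hs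
      _ = Mm := mul_one _
  -- essential bound on a
  obtain ⟨C, hC0, hCa⟩ : ∃ C : ℝ, 0 ≤ C ∧ ∀ᵐ x ∂μ, |a x| ≤ C := by
    refine ⟨(eLpNormEssSup a μ).toReal, ENNReal.toReal_nonneg, ?_⟩
    have hfin : eLpNormEssSup a μ ≠ ⊤ := by
      have h2 := haL.2
      rw [eLpNorm_exponent_top] at h2
      exact h2.ne
    filter_upwards [ae_le_eLpNormEssSup (f := a) (μ := μ)] with x hx
    have h3 := ENNReal.toReal_mono hfin hx
    simpa [Real.norm_eq_abs] using h3
  -- integrability of g'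
  have hg'bd : ∀ᵐ x ∂μ, ‖g' x‖ ≤ (MG + MG + C * (Mm + Mm)) * 2 := by
    filter_upwards [hφ₁bd, hφ₂bd, hCa] with x h1 h2 hc
    rw [hg']
    simp only
    rw [Real.norm_eq_abs, abs_mul]
    have b1 : |Pf (φ₁ x) - Pf (φ₂ x)| ≤ MG + MG :=
      (abs_sub _ _).trans (add_le_add (hPfbd _ h1) (hPfbd _ h2))
    have b2 : |Qf (φ₁ x) - Qf (φ₂ x)| ≤ Mm + Mm :=
      (abs_sub _ _).trans (add_le_add (hQfbd _ h1) (hQfbd _ h2))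
    have b3 : |φ₁ x - φ₂ x| ≤ 2 :=
      (abs_sub _ _).trans (by linarith)
    have b4 : |(Pf (φ₁ x) - Pf (φ₂ x)) + a x * (Qf (φ₁ x) - Qf (φ₂ x))|
        ≤ MG + MG + C * (Mm + Mm) := by
      refine (abs_add_le _ _).trans ?_
      rw [abs_mul]
      exact add_le_add b1 (mul_le_mul hc b2 (abs_nonneg _) hC0)
    exact mul_le_mul b4 b3 (abs_nonneg _) (by positivity)
  have hg'int : Integrable g' μ :=
    Integrable.mono' (integrable_const _) hg'm hg'bd
  -- g' agrees a.e. with the Lambda integrand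
  have heq : g' =ᵐ[μ] fun x =>
      (LambdaFn m Ψ₁'' Ψ₂'' a x (φ₁ x) - LambdaFn m Ψ₁'' Ψ₂'' a x (φ₂ x))
        * (φ₁ x - φ₂ x) := by
    filter_upwards [hφ₁bd, hφ₂bd] with x h1 h2
    have m1 : φ₁ x ∈ Icc (-1 : ℝ) 1 := ⟨(abs_le.mp h1).1, (abs_le.mp h1).2⟩
    have m2 : φ₂ x ∈ Icc (-1 : ℝ) 1 := ⟨(abs_le.mp h2).1, (abs_le.mp h2).2⟩
    rw [hg']
    simp only
    rw [hLam x _ m1, hLam x _ m2]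
    ring
  have hmain : ∀ᵐ x ∂μ, (1 - ρ) * c₈ * (φ₁ x - φ₂ x) ^ 2 ≤ g' x := by
    filter_upwards [hφ₁bd, hφ₂bd, ha0, hconvex] with x h1 h2 h3 h4
    have m1 : φ₁ x ∈ Icc (-1 : ℝ) 1 := ⟨(abs_le.mp h1).1, (abs_le.mp h1).2⟩
    have m2 : φ₂ x ∈ Icc (-1 : ℝ) 1 := ⟨(abs_le.mp h2).1, (abs_le.mp h2).2⟩
    exact key (a x) h3 h4 (φ₁ x) m1 (φ₂ x) m2
  have hgint : Integrable (fun x =>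
      (LambdaFn m Ψ₁'' Ψ₂'' a x (φ₁ x) - LambdaFn m Ψ₁'' Ψ₂'' a x (φ₂ x))
        * (φ₁ x - φ₂ x)) μ := hg'int.congr heq
  rw [← MeasureTheory.integral_const_mul]
  refine integral_mono_of_nonneg ?_ hgint ?_
  · filter_upwards with x
    simp only [Pi.zero_apply]
    exact mul_nonneg (mul_nonneg h1ρ.le hc₈.le) (sq_nonneg _)
  · filter_upwards [hmain, heq] with x hx hex
    calc (1 - ρ) * c₈ * (φ₁ x - φ₂ x) ^ 2 ≤ g' x := hx
      _ = _ := hex
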